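/- (Vector potential representation.) Let U ⊆ ℝ³ be open, let ω, ε, μ ∈ ℂ with ω·ε·μ ≠ 0, and set k² = ω²εμ. Let A, Ã : ℝ³ → ℂ³ be vector fields whose components are three times continuously differentiable on U and satisfy the componentwise Helmholtz equations ΔA + k²A = 0 and ΔÃ + k²Ã = 0 on U. Define the scalar fields φ = (1/(iωεμ))·∇·A and ψ = (1/(iωεμ))·∇·Ã, and the vector fields E = −∇φ + iωA − (1/ε)·∇×Ã and H = (1/μ)·∇×A − ∇ψ + iωÃ. Then (E, H) satisfies the time-harmonic Maxwell equations on U: ∇×H = −iωεE and ∇×E = iωμH. -/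

import Mathlib

open scoped BigOperators

noncomputable section

/-- Points of `ℝ³`. -/
abbrev E3 := EuclideanSpace ℝ (Fin 3)

/-- Partial derivative of a scalar field in the `i`-th coordinate direction. -/
noncomputable def pd (i : Fin 3) (u : E3 → ℂ) : E3 → ℂ :=
  fun x => fderiv ℝ u x (EuclideanSpace.single i 1)

/-- Gradient of a scalar field, as a `ℂ³`-valued field. -/
noncomputable def grad (u : E3 → ℂ) : E3 → Fin 3 → ℂ :=
  fun x i => pd i u x

/-- Laplacian of a scalar field. -/
noncomputable def lap (u : E3 → ℂ) : E3 → ℂ :=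
  fun x => ∑ i : Fin 3, pd i (pd i u) x

/-- Divergence of a `ℂ³`-valued vector field. -/
noncomputable def vdiv (F : E3 → Fin 3 → ℂ) : E3 → ℂ :=
  fun x => ∑ i : Fin 3, pd i (fun y => F y i) x

/-- Curl of a `ℂ³`-valued vector field:
`(∇×F)ᵢ = ∂_{i+1} F_{i+2} − ∂_{i+2} F_{i+1}` (indices mod 3). -/
noncomputable def curl (F : E3 → Fin 3 → ℂ) : E3 → Fin 3 → ℂ :=
  fun x i => pd (i + 1) (fun y => F y (i + 2)) x - pd (i + 2) (fun y => F y (i + 1)) x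

/-- Cross product on `ℂ³`. -/
def crossC (a b : Fin 3 → ℂ) : Fin 3 → ℂ :=
  fun i => a (i + 1) * b (i + 2) - a (i + 2) * b (i + 1)

namespace VPR

lemma contDiffAt_pd {n m : WithTop ℕ∞} {u : E3 → ℂ} {x : E3} (h : ContDiffAt ℝ n u x)
    (hmn : m + 1 ≤ n) (i : Fin 3) : ContDiffAt ℝ m (pd i u) x :=
  (h.fderiv_right hmn).clm_apply contDiffAt_const

lemma pd_add {u v : E3 → ℂ} {x : E3} (hu : DifferentiableAt ℝ u x)
    (hv : DifferentiableAt ℝ v x) (i : Fin 3) :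
    pd i (fun y => u y + v y) x = pd i u x + pd i v x := by
  unfold pd; rw [fderiv_fun_add hu hv]; rfl

lemma pd_sub {u v : E3 → ℂ} {x : E3} (hu : DifferentiableAt ℝ u x)
    (hv : DifferentiableAt ℝ v x) (i : Fin 3) :
    pd i (fun y => u y - v y) x = pd i u x - pd i v x := by
  unfold pd; rw [fderiv_fun_sub hu hv]; rfl

lemma pd_const_mul {u : E3 → ℂ} {x : E3} (hu : DifferentiableAt ℝ u x) (c : ℂ) (i : Fin 3) :
    pd i (fun y => c * u y) x = c * pd i u x := by
  unfold pd; rw [fderiv_const_mul hu]; rfl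

lemma pd_symm {u : E3 → ℂ} {x : E3} (h : ContDiffAt ℝ 2 u x) (i j : Fin 3) :
    pd i (pd j u) x = pd j (pd i u) x := by
  have hd : DifferentiableAt ℝ (fderiv ℝ u) x :=
    (h.fderiv_right (m := 1) (by norm_num)).differentiableAt (by norm_num)
  have hs := h.isSymmSndFDerivAt (by simp [minSmoothness_of_isRCLikeNormedField])
  have key : ∀ a b : Fin 3, pd a (pd b u) x =
      fderiv ℝ (fderiv ℝ u) x (EuclideanSpace.single a 1) (EuclideanSpace.single b 1) := by
    intro a b
    show fderiv ℝ (fun y => (fderiv ℝ u y) (EuclideanSpace.single b 1)) x _ = _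
    rw [fderiv_clm_apply hd (differentiableAt_const _)]
    simp
  rw [key, key, hs]

lemma sum3 (f : Fin 3 → ℂ) (i : Fin 3) : ∑ j, f j = f i + f (i + 1) + f (i + 2) := by
  fin_cases i <;> simp [Fin.sum_univ_three] <;> ring

lemma f21 : ∀ j : Fin 3, j + 2 + 1 = j := by decide
lemma f22 : ∀ j : Fin 3, j + 2 + 2 = j + 1 := by decide
lemma f11 : ∀ j : Fin 3, j + 1 + 1 = j + 2 := by decide
lemma f12 : ∀ j : Fin 3, j + 1 + 2 = j := by decide

/-- Unified Maxwell curl computation for a field of the form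
`P = α·(∇×F) − ∇χ + β·G` with `χ = c·∇·G`. -/
lemma key (U : Set E3) (hU : IsOpen U) (F G : E3 → Fin 3 → ℂ)
    (hF : ∀ j : Fin 3, ContDiffOn ℝ 3 (fun y => F y j) U)
    (hG : ∀ j : Fin 3, ContDiffOn ℝ 3 (fun y => G y j) U)
    (c α β : ℂ) (χ : E3 → ℂ) (hχ : ∀ y, χ y = c * vdiv G y)
    (P : E3 → Fin 3 → ℂ)
    (hP : ∀ y, ∀ j : Fin 3, P y j = α * curl F y j - pd j χ y + β * G y j)
    (x : E3) (hx : x ∈ U) (i : Fin 3) :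
    curl P x i = α * (pd i (vdiv F) x - lap (fun y => F y i) x) + β * curl G x i := by
  have cF : ∀ j : Fin 3, ContDiffAt ℝ 3 (fun z => F z j) x :=
    fun j => (hF j).contDiffAt (hU.mem_nhds hx)
  have cG : ∀ j : Fin 3, ContDiffAt ℝ 3 (fun z => G z j) x :=
    fun j => (hG j).contDiffAt (hU.mem_nhds hx)
  have cpdF : ∀ (a j : Fin 3), ContDiffAt ℝ 2 (pd a (fun z => F z j)) x :=
    fun a j => contDiffAt_pd (cF j) (by norm_num) a
  have cpdG : ∀ (a j : Fin 3), ContDiffAt ℝ 2 (pd a (fun z => G z j)) x :=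
    fun a j => contDiffAt_pd (cG j) (by norm_num) a
  have dpdF : ∀ (a j : Fin 3), DifferentiableAt ℝ (pd a (fun z => F z j)) x :=
    fun a j => (cpdF a j).differentiableAt (by norm_num)
  have dG : ∀ j : Fin 3, DifferentiableAt ℝ (fun z => G z j) x :=
    fun j => (cG j).differentiableAt (by norm_num)
  have hχfun : χ = fun y => c * vdiv G y := funext hχ
  have cχ : ContDiffAt ℝ 2 χ x := by
    rw [hχfun]
    have hv : ContDiffAt ℝ 2 (vdiv G) x := by
      have e : vdiv G = fun y => ∑ j : Fin 3, pd j (fun z => G z j) y := rfl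
      rw [e]
      exact ContDiffAt.sum (fun j _ => cpdG j j)
    exact contDiffAt_const.mul hv
  have dχ : ∀ j : Fin 3, DifferentiableAt ℝ (pd j χ) x :=
    fun j => (contDiffAt_pd (m := 1) cχ (by norm_num) j).differentiableAt (by norm_num)
  have dcF : ∀ j : Fin 3, DifferentiableAt ℝ (fun y => curl F y j) x := by
    intro j
    have e : (fun y => curl F y j)
        = fun y => pd (j+1) (fun z => F z (j+2)) y - pd (j+2) (fun z => F z (j+1)) y := rfl
    rw [e]; exact (dpdF _ _).sub (dpdF _ _)
  -- splitting of pd k (P · j)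
  have hsplit : ∀ k j : Fin 3, pd k (fun y => P y j) x
      = α * pd k (fun y => curl F y j) x - pd k (pd j χ) x + β * pd k (fun z => G z j) x := by
    intro k j
    have e : (fun y => P y j)
        = fun y => (α * curl F y j - pd j χ y) + β * G y j := by
      funext y; exact hP y j
    have h1 : pd k (fun y => (α * curl F y j - pd j χ y) + β * G y j) x
        = pd k (fun y => α * curl F y j - pd j χ y) x + pd k (fun y => β * G y j) x :=
      pd_add (((dcF j).const_mul α).sub (dχ j)) ((dG j).const_mul β) k
    have h2 : pd k (fun y => α * curl F y j - pd j χ y) x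
        = pd k (fun y => α * curl F y j) x - pd k (pd j χ) x :=
      pd_sub ((dcF j).const_mul α) (dχ j) k
    have h3 : pd k (fun y => α * curl F y j) x = α * pd k (fun y => curl F y j) x :=
      pd_const_mul (dcF j) α k
    have h4 : pd k (fun y => β * G y j) x = β * pd k (fun z => G z j) x :=
      pd_const_mul (dG j) β k
    rw [e, h1, h2, h3, h4]
  -- curl components of curl F
  have ecF2 : (fun y => curl F y (i+2))
      = fun y => pd i (fun z => F z (i+1)) y - pd (i+1) (fun z => F z i) y := by
    funext y
    show pd (i+2+1) (fun z => F z (i+2+2)) y - pd (i+2+2) (fun z => F z (i+2+1)) y = _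
    rw [f21, f22]
  have ecF1 : (fun y => curl F y (i+1))
      = fun y => pd (i+2) (fun z => F z i) y - pd i (fun z => F z (i+2)) y := by
    funext y
    show pd (i+1+1) (fun z => F z (i+1+2)) y - pd (i+1+2) (fun z => F z (i+1+1)) y = _
    rw [f11, f12]
  have hc2 : pd (i+1) (fun y => curl F y (i+2)) x
      = pd (i+1) (pd i (fun z => F z (i+1))) x - pd (i+1) (pd (i+1) (fun z => F z i)) x := by
    rw [ecF2]; exact pd_sub (dpdF _ _) (dpdF _ _) _
  have hc1 : pd (i+2) (fun y => curl F y (i+1)) x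
      = pd (i+2) (pd (i+2) (fun z => F z i)) x - pd (i+2) (pd i (fun z => F z (i+2))) x := by
    rw [ecF1]; exact pd_sub (dpdF _ _) (dpdF _ _) _
  -- grad div F component
  have hdiv : pd i (vdiv F) x
      = pd i (pd i (fun z => F z i)) x + pd i (pd (i+1) (fun z => F z (i+1))) x
        + pd i (pd (i+2) (fun z => F z (i+2))) x := by
    have e : vdiv F = fun y => (pd i (fun z => F z i) y + pd (i+1) (fun z => F z (i+1)) y)
        + pd (i+2) (fun z => F z (i+2)) y := by
      funext y
      show (∑ j : Fin 3, pd j (fun z => F z j) y) = _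
      rw [sum3 (fun j => pd j (fun z => F z j) y) i]
    rw [e]
    rw [pd_add ((dpdF i i).fun_add (dpdF (i+1) (i+1))) (dpdF (i+2) (i+2)) i,
        pd_add (dpdF i i) (dpdF (i+1) (i+1)) i]
  -- Laplacian component
  have hlap : lap (fun y => F y i) x
      = pd i (pd i (fun z => F z i)) x + pd (i+1) (pd (i+1) (fun z => F z i)) x
        + pd (i+2) (pd (i+2) (fun z => F z i)) x :=
    sum3 (fun j => pd j (pd j (fun z => F z i)) x) i
  -- symmetry swaps
  have s1 : pd i (pd (i+1) (fun z => F z (i+1))) x = pd (i+1) (pd i (fun z => F z (i+1))) x :=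
    pd_symm ((cF (i+1)).of_le (by norm_num)) i (i+1)
  have s2 : pd i (pd (i+2) (fun z => F z (i+2))) x = pd (i+2) (pd i (fun z => F z (i+2))) x :=
    pd_symm ((cF (i+2)).of_le (by norm_num)) i (i+2)
  have sχ : pd (i+1) (pd (i+2) χ) x = pd (i+2) (pd (i+1) χ) x := pd_symm cχ (i+1) (i+2)
  -- assemble
  have ecurlP : curl P x i
      = pd (i+1) (fun y => P y (i+2)) x - pd (i+2) (fun y => P y (i+1)) x := rfl
  have ecurlG : curl G x i
      = pd (i+1) (fun z => G z (i+2)) x - pd (i+2) (fun z => G z (i+1)) x := rfl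
  rw [ecurlP, hsplit (i+1) (i+2), hsplit (i+2) (i+1), hc2, hc1, hdiv, hlap, s1, s2, sχ,
    ecurlG]
  ring

end VPR

theorem vector_potential_representation_satisfies_maxwell
    (U : Set E3) (hU : IsOpen U) (ω ε μ : ℂ) (hωεμ : ω * ε * μ ≠ 0)
    (A At : E3 → Fin 3 → ℂ)
    (hA : ∀ i : Fin 3, ContDiffOn ℝ 3 (fun x => A x i) U)
    (hAt : ∀ i : Fin 3, ContDiffOn ℝ 3 (fun x => At x i) U)
    (hHelmA : ∀ x ∈ U, ∀ i : Fin 3,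
      lap (fun y => A y i) x + (ω ^ 2 * ε * μ) * A x i = 0)
    (hHelmAt : ∀ x ∈ U, ∀ i : Fin 3,
      lap (fun y => At y i) x + (ω ^ 2 * ε * μ) * At x i = 0)
    (φ ψ : E3 → ℂ)
    (hφ : ∀ y, φ y = (1 / (Complex.I * ω * ε * μ)) * vdiv A y)
    (hψ : ∀ y, ψ y = (1 / (Complex.I * ω * ε * μ)) * vdiv At y)
    (E H : E3 → Fin 3 → ℂ)
    (hEdef : ∀ y, ∀ i : Fin 3,
      E y i = -(grad φ y i) + Complex.I * ω * A y i - (1 / ε) * curl At y i)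
    (hHdef : ∀ y, ∀ i : Fin 3,
      H y i = (1 / μ) * curl A y i - grad ψ y i + Complex.I * ω * At y i) :
    ∀ x ∈ U, ∀ i : Fin 3,
      curl H x i = -Complex.I * ω * ε * E x i ∧
      curl E x i = Complex.I * ω * μ * H x i := by
  intro x hx i
  have hω : ω ≠ 0 := fun h => hωεμ (by simp [h])
  have hε : ε ≠ 0 := fun h => hωεμ (by simp [h])
  have hμ : μ ≠ 0 := fun h => hωεμ (by simp [h])
  have hI : Complex.I ≠ 0 := Complex.I_ne_zero
  set c : ℂ := 1 / (Complex.I * ω * ε * μ) with hc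
  -- differentiability of vdiv A, vdiv At at x
  have cA : ∀ j : Fin 3, ContDiffAt ℝ 3 (fun z => A z j) x :=
    fun j => (hA j).contDiffAt (hU.mem_nhds hx)
  have cAt : ∀ j : Fin 3, ContDiffAt ℝ 3 (fun z => At z j) x :=
    fun j => (hAt j).contDiffAt (hU.mem_nhds hx)
  have dvA : DifferentiableAt ℝ (vdiv A) x := by
    have e : vdiv A = fun y => ∑ j : Fin 3, pd j (fun z => A z j) y := rfl
    rw [e]
    exact DifferentiableAt.fun_sum (fun j _ =>
      (VPR.contDiffAt_pd (m := 2) (cA j) (by norm_num) j).differentiableAt (by norm_num))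
  have dvAt : DifferentiableAt ℝ (vdiv At) x := by
    have e : vdiv At = fun y => ∑ j : Fin 3, pd j (fun z => At z j) y := rfl
    rw [e]
    exact DifferentiableAt.fun_sum (fun j _ =>
      (VPR.contDiffAt_pd (m := 2) (cAt j) (by norm_num) j).differentiableAt (by norm_num))
  have hgradφ : grad φ x i = c * pd i (vdiv A) x := by
    show pd i φ x = _
    rw [show φ = fun y => c * vdiv A y from funext hφ]
    exact VPR.pd_const_mul dvA c i
  have hgradψ : grad ψ x i = c * pd i (vdiv At) x := by
    show pd i ψ x = _
    rw [show ψ = fun y => c * vdiv At y from funext hψ]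
    exact VPR.pd_const_mul dvAt c i
  have hlapA : lap (fun y => A y i) x = -((ω ^ 2 * ε * μ) * A x i) := by
    have := hHelmA x hx i; linear_combination this
  have hlapAt : lap (fun y => At y i) x = -((ω ^ 2 * ε * μ) * At x i) := by
    have := hHelmAt x hx i; linear_combination this
  have keyH : curl H x i
      = (1 / μ) * (pd i (vdiv A) x - lap (fun y => A y i) x)
        + (Complex.I * ω) * curl At x i :=
    VPR.key U hU A At hA hAt c (1 / μ) (Complex.I * ω) ψ hψ H
      (fun y j => by rw [hHdef y j]; rfl) x hx i
  have keyE : curl E x i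
      = (-(1 / ε)) * (pd i (vdiv At) x - lap (fun y => At y i) x)
        + (Complex.I * ω) * curl A x i :=
    VPR.key U hU At A hAt hA c (-(1 / ε)) (Complex.I * ω) φ hφ E
      (fun y j => by rw [hEdef y j]; simp only [grad]; ring) x hx i
  have hI2 : Complex.I ^ 2 = -1 := Complex.I_sq
  have h1 : (1:ℂ) / (Complex.I * ω * ε * μ) = -Complex.I / (ω * ε * μ) := by
    rw [div_eq_div_iff (by simp [hω, hε, hμ, hI]) (by simp [hω, hε, hμ])]
    linear_combination (ω * ε * μ) * hI2
  have alg1 : ∀ D a C : ℂ,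
      1 / μ * (D - -(ω ^ 2 * ε * μ * a)) + Complex.I * ω * C
        = -Complex.I * ω * ε * (-(1 / (Complex.I * ω * ε * μ) * D)
            + Complex.I * ω * a - 1 / ε * C) := by
    intro D a C
    rw [h1]
    field_simp
    linear_combination (D + ω ^ 2 * ε * μ * a) * hI2
  have alg2 : ∀ D a C : ℂ,
      -(1 / ε) * (D - -(ω ^ 2 * ε * μ * a)) + Complex.I * ω * C
        = Complex.I * ω * μ * (1 / μ * C - 1 / (Complex.I * ω * ε * μ) * D
            + Complex.I * ω * a) := by
    intro D a C
    rw [h1]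
    field_simp
    linear_combination (-(D + ω ^ 2 * ε * μ * a)) * hI2
  constructor
  · rw [keyH, hlapA, hEdef x i, hgradφ, hc]
    exact alg1 (pd i (vdiv A) x) (A x i) (curl At x i)
  · rw [keyE, hlapAt, hHdef x i, hgradψ, hc]
    exact alg2 (pd i (vdiv At) x) (At x i) (curl A x i)
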